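/- Suppose that for the solution ({x_n},{y_n}) there exist a constant M1 > 0 and a constant M2 ≥ 0 such that y_n ≤ M1·x_n + M2 for all n ∈ ℕ. Suppose further that A = 0, one of the following holds: (i) I_B ⊆ I_β, I_C ⊆ I_γ, and I_B ≠ ∅; (ii) q = 0, I_D ⊆ I_δ, I_E ⊆ I_ε, and I_C ≠ ∅; (iii) p > 0, q > 0, I_D ⊆ I_δ, I_E ⊆ I_ε, and I_C ≠ ∅; and that there exists a positive integer η such that for every sequence {c_m}_{m=1}^∞ with c_m ∈ I_β ∪ (I_γ \ I_C) for all m, there exist positive integers N1 ≤ N2 ≤ η with Σ_{m=N1}^{N2} c_m ∈ I_B. Then there exist M > 0 and N ∈ ℕ such that x_n ≤ M and y_n ≤ M for all n > N. -/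

import Mathlib

open Finset

/-- The index set of the coefficient function `f` on `{1, …, k}`:
the set of indices `i ∈ {1, …, k}` with `f i > 0`. -/
noncomputable def indexSet (k : ℕ) (f : ℕ → ℝ) : Finset ℕ :=
  (Finset.Icc 1 k).filter fun i => 0 < f i

/-- The iteration condition: for every sequence `c` (indexed by `1, 2, …`)
taking values in `S`, there exist positive integers `N1 ≤ N2 ≤ η` such that
`∑_{m=N1}^{N2} c m ∈ T`. -/
def iterCond (η : ℕ) (S T : Finset ℕ) : Prop :=
  ∀ c : ℕ → ℕ, (∀ m, 1 ≤ m → c m ∈ S) →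
    ∃ N1 N2 : ℕ, 0 < N1 ∧ N1 ≤ N2 ∧ N2 ≤ η ∧ (∑ m ∈ Finset.Icc N1 N2, c m) ∈ T

lemma restrict_sum (k : ℕ) (f g : ℕ → ℝ) (hf : ∀ i, 0 ≤ f i) :
    ∑ i ∈ indexSet k f, f i * g i = ∑ i ∈ Icc 1 k, f i * g i := by
  apply Finset.sum_filter_of_ne
  intro i _ hne
  rcases (hf i).eq_or_lt with h | h
  · exact absurd (by rw [← h, zero_mul]) hne
  · exact h

lemma exists_big (s : Finset ℕ) (hs : s.Nonempty) (k : ℕ) (hcard : s.card ≤ k)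
    (g : ℕ → ℝ) (t : ℝ) (ht : 0 < t) (h : (k : ℝ) * t ≤ ∑ i ∈ s, g i) :
    ∃ i ∈ s, t ≤ g i := by
  by_contra hcon
  push_neg at hcon
  have h1 : ∑ i ∈ s, g i < ∑ i ∈ s, t := Finset.sum_lt_sum_of_nonempty hs hcon
  rw [Finset.sum_const] at h1
  have h2 : (s.card : ℝ) * t ≤ (k : ℝ) * t := by
    apply mul_le_mul_of_nonneg_right _ ht.le
    exact_mod_cast hcard
  rw [nsmul_eq_mul] at h1
  linarith

lemma indexSet_subset (k : ℕ) (f : ℕ → ℝ) : indexSet k f ⊆ Icc 1 k :=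
  Finset.filter_subset _ _

set_option maxHeartbeats 1000000 in
lemma core (k : ℕ) (hk : 0 < k) (α : ℝ) (β γ B C : ℕ → ℝ)
    (hα : 0 ≤ α) (hβ : ∀ i, 0 ≤ β i) (hγ : ∀ i, 0 ≤ γ i)
    (hB : ∀ j, 0 ≤ B j) (hC : ∀ j, 0 ≤ C j)
    (x y : ℕ → ℝ) (hxnn : ∀ n, 0 ≤ x n) (hynn : ∀ n, 0 ≤ y n)
    (M1 M2 : ℝ) (hM1 : 0 < M1) (hM2 : 0 ≤ M2) (hcmp : ∀ n, y n ≤ M1 * x n + M2)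
    (hdpos : ∀ n, k ≤ n →
      0 < ∑ j ∈ Icc 1 k, B j * x (n - j) + ∑ j ∈ Icc 1 k, C j * y (n - j))
    (hrec : ∀ n, k ≤ n →
      x n * (∑ j ∈ Icc 1 k, B j * x (n - j) + ∑ j ∈ Icc 1 k, C j * y (n - j)) =
        α + ∑ i ∈ Icc 1 k, β i * x (n - i) + ∑ i ∈ Icc 1 k, γ i * y (n - i))
    (d : ℝ) (hd0 : 0 < d)
    (hd : ∀ n, 2 * k ≤ n →
      d ≤ ∑ j ∈ Icc 1 k, B j * x (n - j) + ∑ j ∈ Icc 1 k, C j * y (n - j))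
    (hη : ∃ η : ℕ, 0 < η ∧
      iterCond η (indexSet k β ∪ (indexSet k γ \ indexSet k C)) (indexSet k B)) :
    ∃ Mx : ℝ, ∀ n, x n ≤ Mx := by
  obtain ⟨η, hη0, hiter⟩ := hη
  set S : Finset ℕ := indexSet k β ∪ (indexSet k γ \ indexSet k C) with hS
  set Dn : ℕ → ℝ := fun n => ∑ j ∈ Icc 1 k, B j * x (n - j) + ∑ j ∈ Icc 1 k, C j * y (n - j)
    with hDn
  have hDneq : ∀ m, Dn m = ∑ j ∈ Icc 1 k, B j * x (m - j) + ∑ j ∈ Icc 1 k, C j * y (m - j) :=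
    fun m => rfl
  set K0 : ℝ := ∑ i ∈ indexSet k γ ∩ indexSet k C, γ i / C i with hK0def
  set K1 : ℝ := 1 + ∑ i ∈ Icc 1 k, (β i + M1 * γ i) with hK1def
  set K2 : ℝ := α + M2 * ∑ i ∈ Icc 1 k, γ i with hK2def
  have hK0 : 0 ≤ K0 := by
    apply Finset.sum_nonneg
    intro i _
    exact div_nonneg (hγ i) (hC i)
  have hK1 : 0 < K1 := by
    have : 0 ≤ ∑ i ∈ Icc 1 k, (β i + M1 * γ i) := by
      apply Finset.sum_nonneg
      intro i _
      have := hβ i; have := hγ i; nlinarith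
    rw [hK1def]; linarith
  have hK2 : 0 ≤ K2 := by
    have : 0 ≤ ∑ i ∈ Icc 1 k, γ i := Finset.sum_nonneg fun i _ => hγ i
    rw [hK2def]; nlinarith
  have hβK1 : ∀ i ∈ Icc 1 k, β i ≤ K1 := by
    intro i hi
    have h1 : β i + M1 * γ i ≤ ∑ j ∈ Icc 1 k, (β j + M1 * γ j) :=
      Finset.single_le_sum (f := fun j => β j + M1 * γ j)
        (fun j _ => by have := hβ j; have := hγ j; nlinarith) hi
    have := hγ i
    rw [hK1def]; nlinarith
  have hγK1 : ∀ i ∈ Icc 1 k, M1 * γ i ≤ K1 := by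
    intro i hi
    have h1 : β i + M1 * γ i ≤ ∑ j ∈ Icc 1 k, (β j + M1 * γ j) :=
      Finset.single_le_sum (f := fun j => β j + M1 * γ j)
        (fun j _ => by have := hβ j; have := hγ j; nlinarith) hi
    have := hβ i
    rw [hK1def]; nlinarith
  -- the key inequality
  have KI : ∀ n, k ≤ n → (x n - K0) * Dn n ≤ K2 + 2 * K1 * ∑ i ∈ S, x (n - i) := by
    intro n hn
    have hSx : 0 ≤ ∑ i ∈ S, x (n - i) := Finset.sum_nonneg fun i _ => hxnn _
    have hb : ∑ i ∈ Icc 1 k, β i * x (n - i) ≤ K1 * ∑ i ∈ S, x (n - i) := by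
      rw [← restrict_sum k β (fun i => x (n - i)) hβ]
      calc ∑ i ∈ indexSet k β, β i * x (n - i)
          ≤ ∑ i ∈ indexSet k β, K1 * x (n - i) := by
            apply Finset.sum_le_sum
            intro i hi
            exact mul_le_mul_of_nonneg_right (hβK1 i (indexSet_subset k β hi)) (hxnn _)
        _ = K1 * ∑ i ∈ indexSet k β, x (n - i) := by rw [Finset.mul_sum]
        _ ≤ K1 * ∑ i ∈ S, x (n - i) := by
            apply mul_le_mul_of_nonneg_left _ hK1.le
            apply Finset.sum_le_sum_of_subset_of_nonneg (Finset.subset_union_left)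
            intro i _ _; exact hxnn _
    have hg : ∑ i ∈ Icc 1 k, γ i * y (n - i) ≤
        K0 * Dn n + M2 * ∑ i ∈ Icc 1 k, γ i + K1 * ∑ i ∈ S, x (n - i) := by
      rw [← restrict_sum k γ (fun i => y (n - i)) hγ]
      rw [← Finset.sum_inter_add_sum_sdiff (indexSet k γ) (indexSet k C)
        (fun i => γ i * y (n - i))]
      have part1 : ∑ i ∈ indexSet k γ ∩ indexSet k C, γ i * y (n - i) ≤ K0 * Dn n := by
        rw [hK0def, Finset.sum_mul]
        apply Finset.sum_le_sum
        intro i hi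
        have hiC : i ∈ indexSet k C := Finset.mem_of_mem_inter_right hi
        have hCi : 0 < C i := (Finset.mem_filter.mp hiC).2
        have hiIcc : i ∈ Icc 1 k := (Finset.mem_filter.mp hiC).1
        have h1 : C i * y (n - i) ≤ Dn n := by
          have h2 : C i * y (n - i) ≤ ∑ j ∈ Icc 1 k, C j * y (n - j) :=
            Finset.single_le_sum (f := fun j => C j * y (n - j))
              (fun j _ => mul_nonneg (hC j) (hynn _)) hiIcc
          have h3 : 0 ≤ ∑ j ∈ Icc 1 k, B j * x (n - j) :=
            Finset.sum_nonneg fun j _ => mul_nonneg (hB j) (hxnn _)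
          rw [hDneq]; linarith
        calc γ i * y (n - i) = (γ i / C i) * (C i * y (n - i)) := by
              field_simp
          _ ≤ (γ i / C i) * Dn n :=
              mul_le_mul_of_nonneg_left h1 (div_nonneg (hγ i) (hC i))
      have part2 : ∑ i ∈ indexSet k γ \ indexSet k C, γ i * y (n - i) ≤
          M2 * ∑ i ∈ Icc 1 k, γ i + K1 * ∑ i ∈ S, x (n - i) := by
        calc ∑ i ∈ indexSet k γ \ indexSet k C, γ i * y (n - i)
            ≤ ∑ i ∈ indexSet k γ \ indexSet k C, (K1 * x (n - i) + M2 * γ i) := by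
              apply Finset.sum_le_sum
              intro i hi
              have hiIcc : i ∈ Icc 1 k :=
                indexSet_subset k γ (Finset.mem_sdiff.mp hi).1
              have h1 : γ i * y (n - i) ≤ γ i * (M1 * x (n - i) + M2) :=
                mul_le_mul_of_nonneg_left (hcmp _) (hγ i)
              have h2 := hγK1 i hiIcc
              have := hxnn (n - i); have := hγ i
              nlinarith
          _ = K1 * ∑ i ∈ indexSet k γ \ indexSet k C, x (n - i) +
              M2 * ∑ i ∈ indexSet k γ \ indexSet k C, γ i := by
              rw [Finset.sum_add_distrib, Finset.mul_sum, Finset.mul_sum]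
          _ ≤ M2 * ∑ i ∈ Icc 1 k, γ i + K1 * ∑ i ∈ S, x (n - i) := by
              have h1 : ∑ i ∈ indexSet k γ \ indexSet k C, x (n - i) ≤
                  ∑ i ∈ S, x (n - i) := by
                apply Finset.sum_le_sum_of_subset_of_nonneg (Finset.subset_union_right)
                intro i _ _; exact hxnn _
              have h2 : ∑ i ∈ indexSet k γ \ indexSet k C, γ i ≤ ∑ i ∈ Icc 1 k, γ i := by
                apply Finset.sum_le_sum_of_subset_of_nonneg
                · exact (Finset.sdiff_subset).trans (indexSet_subset k γ)
                · intro i _ _; exact hγ i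
              have h3 := mul_le_mul_of_nonneg_left h1 hK1.le
              have h4 := mul_le_mul_of_nonneg_left h2 hM2
              linarith
      linarith
    have hrecn := hrec n hn
    have key : x n * Dn n ≤ α + K1 * ∑ i ∈ S, x (n - i) +
        (K0 * Dn n + M2 * ∑ i ∈ Icc 1 k, γ i + K1 * ∑ i ∈ S, x (n - i)) := by
      rw [← hDneq n] at hrecn
      linarith [hb, hg]
    rw [hK2def]; nlinarith [key]
  clear_value S Dn K0 K1 K2
  -- case split on S empty
  by_cases hSemp : S = ∅
  · -- S empty: direct bound
    refine ⟨(∑ m ∈ Finset.range (2 * k), x m) + (K0 + K2 / d), fun n => ?_⟩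
    have hsum0 : 0 ≤ ∑ m ∈ Finset.range (2 * k), x m :=
      Finset.sum_nonneg fun m _ => hxnn m
    have hK2d : 0 ≤ K2 / d := div_nonneg hK2 hd0.le
    by_cases hn : 2 * k ≤ n
    · have h1 := KI n (by omega)
      rw [hSemp, Finset.sum_empty, mul_zero, add_zero] at h1
      have h2 := hd n hn
      rw [← hDneq n] at h2
      have hx : x n ≤ K0 + K2 / d := by
        rcases le_or_gt (x n) K0 with h | h
        · linarith
        · have h3 : (x n - K0) * d ≤ (x n - K0) * Dn n :=
            mul_le_mul_of_nonneg_left h2 (by linarith)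
          have h4 : (x n - K0) * d ≤ K2 := le_trans h3 h1
          have h5 : x n - K0 ≤ K2 / d := (le_div_iff₀ hd0).mpr h4
          linarith
      linarith
    · push_neg at hn
      have := Finset.single_le_sum (f := fun m => x m) (fun m _ => hxnn m)
        (Finset.mem_range.mpr hn)
      linarith
  · -- S nonempty: contradiction argument
    have hSne : S.Nonempty := Finset.nonempty_iff_ne_empty.mpr hSemp
    obtain ⟨s₀, hs₀⟩ := hSne
    have hSne : S.Nonempty := ⟨s₀, hs₀⟩
    have hIBne : (indexSet k B).Nonempty := by
      obtain ⟨N1, N2, _, _, _, hmem⟩ := hiter (fun _ => s₀) (fun m _ => hs₀)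
      exact ⟨_, hmem⟩
    set b : ℝ := (indexSet k B).inf' hIBne B with hbdef
    have hb0 : 0 < b := by
      rw [hbdef, Finset.lt_inf'_iff]
      intro j hj; exact (Finset.mem_filter.mp hj).2
    have hble : ∀ j ∈ indexSet k B, b ≤ B j := fun j hj => Finset.inf'_le B hj
    clear_value b
    have hSk : ∀ i ∈ S, 1 ≤ i ∧ i ≤ k := by
      intro i hi
      rw [hS] at hi
      rcases Finset.mem_union.mp hi with h | h
      · exact Finset.mem_Icc.mp (indexSet_subset k β h)
      · exact Finset.mem_Icc.mp (indexSet_subset k γ (Finset.mem_sdiff.mp h).1)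
    have hScardN : S.card ≤ k := by
      have h1 : S ⊆ Icc 1 k := fun i hi => Finset.mem_Icc.mpr (hSk i hi)
      have h2 := Finset.card_le_card h1
      rwa [Nat.card_Icc, Nat.add_sub_cancel] at h2
    have hScard : (S.card : ℝ) ≤ (k : ℝ) := by exact_mod_cast hScardN
    have hkR : (0 : ℝ) < (k : ℝ) := by exact_mod_cast hk
    by_contra hcon
    push_neg at hcon
    -- constants
    set a : ℝ := 2 * K1 * k / d with hadef
    have ha0 : 0 < a := by
      rw [hadef]; positivity
    have had : a * d = 2 * K1 * k := by
      rw [hadef]; field_simp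
    clear_value a
    set e : ℝ := K0 + K2 / d with hedef
    have he0 : 0 ≤ e := by
      have : 0 ≤ K2 / d := div_nonneg hK2 hd0.le
      rw [hedef]; linarith
    clear_value e
    set P : ℝ := (a + 1) ^ η with hPdef
    have hP1 : 1 ≤ P := by
      rw [hPdef]; exact one_le_pow₀ (by linarith)
    clear_value P
    set Q : ℝ := P * e * η with hQdef
    have hQ0 : 0 ≤ Q := by
      rw [hQdef]; positivity
    clear_value Q
    set R : ℕ := 3 * k + k * η + 2 with hRdef
    set mi : ℝ := ∑ m ∈ Finset.range R, x m with hmidef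
    have hmi0 : 0 ≤ mi := Finset.sum_nonneg fun m _ => hxnn m
    have hmile : ∀ m, m < R → x m ≤ mi := fun m hm =>
      Finset.single_le_sum (f := fun i => x i) (fun i _ => hxnn i) (Finset.mem_range.mpr hm)
    clear_value R mi
    -- choice of T
    obtain ⟨T, hT1, hTK0, hTbig⟩ : ∃ T : ℝ, 1 ≤ T ∧ K0 ≤ T / 2 ∧
        K2 + 2 * K1 * ((k : ℝ) * (P * T + Q + mi + T)) + 1 ≤ (T - K0) * (b * T) := by
      set c1 : ℝ := 2 * K1 * ((k : ℝ) * (P + 1)) with hc1def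
      set c0 : ℝ := K2 + 2 * K1 * ((k : ℝ) * (Q + mi)) + 1 with hc0def
      have hc10 : 0 ≤ c1 := by rw [hc1def]; positivity
      have hc00 : 1 ≤ c0 := by
        have : 0 ≤ 2 * K1 * ((k : ℝ) * (Q + mi)) := by positivity
        rw [hc0def]; linarith
      refine ⟨max (2 * K0) (max 1 (2 * (c1 + c0) / b)), ?_, ?_, ?_⟩
      · exact le_trans (le_max_left 1 _) (le_max_right _ _)
      · have := le_max_left (2 * K0) (max 1 (2 * (c1 + c0) / b))
        linarith
      · set T := max (2 * K0) (max 1 (2 * (c1 + c0) / b)) with hTdef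
        have hT1 : 1 ≤ T := le_trans (le_max_left 1 _) (le_max_right _ _)
        have hTK0 : K0 ≤ T / 2 := by
          have := le_max_left (2 * K0) (max 1 (2 * (c1 + c0) / b))
          linarith
        have hbT : 2 * (c1 + c0) ≤ b * T := by
          have h1 : 2 * (c1 + c0) / b ≤ T :=
            le_trans (le_max_right 1 _) (le_max_right _ _)
          rw [div_le_iff₀ hb0] at h1
          linarith
        have hexp : K2 + 2 * K1 * ((k : ℝ) * (P * T + Q + mi + T)) + 1 = c1 * T + c0 := by
          rw [hc1def, hc0def]; ring
        rw [hexp]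
        have h1 : 2 * (c1 + c0) * T ≤ (b * T) * T :=
          mul_le_mul_of_nonneg_right hbT (by linarith)
        have h2 : (T / 2) * (b * T) ≤ (T - K0) * (b * T) :=
          mul_le_mul_of_nonneg_right (by linarith)
            (mul_nonneg hb0.le (by linarith))
        have h3 : c0 * 1 ≤ c0 * T := mul_le_mul_of_nonneg_left hT1 (by linarith)
        nlinarith [h1, h2, h3]
    have hT0 : 0 < T := by linarith
    -- the u sequence
    obtain ⟨u, hu0, hustep⟩ : ∃ u : ℕ → ℝ, u 0 = T ∧ ∀ m, u (m + 1) = max T (e + a * u m) :=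
      ⟨fun m => Nat.rec T (fun _ p => max T (e + a * p)) m, rfl, fun m => rfl⟩
    have huT : ∀ m, T ≤ u m := by
      intro m
      cases m with
      | zero => rw [hu0]
      | succ m => rw [hustep]; exact le_max_left _ _
    have hust : ∀ m, e + a * u m ≤ u (m + 1) := fun m => by
      rw [hustep]; exact le_max_right _ _
    have hub : ∀ m : ℕ, u m ≤ (a + 1) ^ m * (T + e * m) := by
      intro m
      induction m with
      | zero => simp [hu0]
      | succ m ih =>
        rw [hustep]
        set pm : ℝ := (a + 1) ^ m with hpm
        have h1 : (1 : ℝ) ≤ pm := one_le_pow₀ (by linarith)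
        have h2 : ((a : ℝ) + 1) ^ (m + 1) = pm * (a + 1) := pow_succ _ _
        have hm0 : (0 : ℝ) ≤ (m : ℝ) := Nat.cast_nonneg m
        have hXnn : (0 : ℝ) ≤ T + e * m := by nlinarith [mul_nonneg he0 hm0]
        have q1 : (1 : ℝ) ≤ pm * (a + 1) := by nlinarith [h1, ha0.le]
        have hcast : ((m + 1 : ℕ) : ℝ) = (m : ℝ) + 1 := by push_cast; ring
        rw [hcast, h2]
        have hgoal : pm * (a + 1) * (T + e * ((m : ℝ) + 1)) =
            pm * (a + 1) * (T + e * m) + pm * (a + 1) * e := by ring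
        rw [hgoal]
        have q2 : T + e * m ≤ pm * (a + 1) * (T + e * m) := le_mul_of_one_le_left hXnn q1
        have q4 : e ≤ pm * (a + 1) * e := le_mul_of_one_le_left he0 q1
        apply max_le
        · linarith [mul_nonneg he0 hm0]
        · have q3 : a * u m ≤ a * (pm * (T + e * m)) := mul_le_mul_of_nonneg_left ih ha0.le
          have q6 : 0 ≤ pm * (T + e * m) := mul_nonneg (by linarith) hXnn
          nlinarith [q3, q4, q6]
    have huη : u η ≤ P * T + Q := by
      have h1 := hub η
      have h2 : (a + 1) ^ η * (T + e * η) = P * T + Q := by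
        rw [hQdef, hPdef]; ring
      linarith
    -- L and n₀
    set L : ℝ := max (u η) (max mi T) with hLdef
    have hLuη : u η ≤ L := le_max_left _ _
    have hLmi : mi ≤ L := le_trans (le_max_left mi T) (le_max_right _ _)
    have hLT : T ≤ L := le_trans (le_max_right mi T) (le_max_right _ _)
    have hL0 : 0 ≤ L := by linarith
    have hLle : L ≤ P * T + Q + mi + T := by
      rw [hLdef]
      apply max_le
      · linarith
      · apply max_le
        · nlinarith [hP1, hT0, hQ0]
        · nlinarith [hP1, hT0, hQ0, hmi0]
    obtain ⟨n₀, hxn₀, hmin⟩ : ∃ n₀, L < x n₀ ∧ ∀ m, m < n₀ → x m ≤ L := by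
      classical
      exact ⟨Nat.find (hcon L), Nat.find_spec (hcon L),
        fun m hm => not_lt.mp (Nat.find_min (hcon L) hm)⟩
    have hn₀R : R ≤ n₀ := by
      by_contra h
      push_neg at h
      have := hmile n₀ h
      linarith
    -- the trace-back step
    have step : ∀ n, 2 * k ≤ n → ∀ s : ℝ, 0 < s → e + a * s ≤ x n →
        ∃ i ∈ S, s ≤ x (n - i) := by
      intro n hn s hs hxs
      have h1 := KI n (by omega)
      have h2 := hd n hn
      rw [← hDneq n] at h2
      have hK2d : 0 ≤ K2 / d := div_nonneg hK2 hd0.le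
      have hxK0 : 0 < x n - K0 := by
        have : 0 < a * s := mul_pos ha0 hs
        rw [hedef] at hxs
        linarith
      have h3 : (x n - K0) * d ≤ (x n - K0) * Dn n :=
        mul_le_mul_of_nonneg_left h2 hxK0.le
      have h6 : (K2 / d + a * s) * d = K2 + 2 * K1 * ((k : ℝ) * s) := by
        have hdd : K2 / d * d = K2 := div_mul_cancel₀ K2 (ne_of_gt hd0)
        calc (K2 / d + a * s) * d = K2 / d * d + a * d * s := by ring
          _ = K2 + 2 * K1 * ((k : ℝ) * s) := by rw [hdd, had]; ring
      have h4 : K2 + 2 * K1 * ((k : ℝ) * s) ≤ (x n - K0) * d := by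
        rw [← h6]
        apply mul_le_mul_of_nonneg_right _ hd0.le
        rw [hedef] at hxs
        linarith
      have h5 : (k : ℝ) * s ≤ ∑ i ∈ S, x (n - i) := by
        have h7 : 2 * K1 * ((k : ℝ) * s) ≤ 2 * K1 * ∑ i ∈ S, x (n - i) := by linarith
        exact le_of_mul_le_mul_left h7 (by linarith)
      exact exists_big S hSne k hScardN (fun i => x (n - i)) s hs h5
    -- construct the trace
    have trace : ∀ m, m ≤ η → ∃ ns : ℕ → ℕ, ∃ c : ℕ → ℕ,
        ns 0 = n₀ ∧
        (∀ t, t < m → c (t + 1) ∈ S ∧ ns t = ns (t + 1) + c (t + 1)) ∧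
        (∀ t, t ≤ m → u (η - t) ≤ x (ns t) ∧ n₀ ≤ ns t + t * k) := by
      intro m
      induction m with
      | zero =>
        intro _
        refine ⟨fun _ => n₀, fun _ => 0, rfl, fun t ht => absurd ht (Nat.not_lt_zero t), ?_⟩
        intro t ht
        have ht0 : t = 0 := Nat.le_zero.mp ht
        subst ht0
        constructor
        · exact le_of_lt (lt_of_le_of_lt hLuη hxn₀)
        · show n₀ ≤ n₀ + 0 * k
          omega
      | succ m ih =>
        intro hm1
        obtain ⟨ns, c, h0, hc, hinv⟩ := ih (by omega)
        obtain ⟨hxm, hnm⟩ := hinv m le_rfl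
        have hmk : m * k ≤ k * η := by
          rw [mul_comm]
          exact Nat.mul_le_mul_left k (by omega)
        have hnsm : 3 * k + 2 ≤ ns m := by omega
        have hs0 : 0 < u (η - (m + 1)) := lt_of_lt_of_le hT0 (huT _)
        have heq2 : η - m = (η - (m + 1)) + 1 := by omega
        have hxge : e + a * u (η - (m + 1)) ≤ x (ns m) := by
          have h1 := hust (η - (m + 1))
          rw [← heq2] at h1
          linarith
        obtain ⟨i, hiS, hxi⟩ := step (ns m) (by omega) _ hs0 hxge
        obtain ⟨hi1, hik⟩ := hSk i hiS
        refine ⟨fun t => if t = m + 1 then ns m - i else ns t,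
                fun t => if t = m + 1 then i else c t, ?_, ?_, ?_⟩
        · show (if (0 : ℕ) = m + 1 then ns m - i else ns 0) = n₀
          rw [if_neg (by omega : ¬ (0 : ℕ) = m + 1)]
          exact h0
        · intro t ht
          show (if t + 1 = m + 1 then i else c (t + 1)) ∈ S ∧
            (if t = m + 1 then ns m - i else ns t) =
              (if t + 1 = m + 1 then ns m - i else ns (t + 1)) +
              (if t + 1 = m + 1 then i else c (t + 1))
          rcases Nat.lt_succ_iff_lt_or_eq.mp ht with h | h
          · rw [if_neg (by omega : ¬ t + 1 = m + 1), if_neg (by omega : ¬ t = m + 1),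
              if_neg (by omega : ¬ t + 1 = m + 1)]
            exact hc t h
          · subst h
            rw [if_pos rfl, if_neg (by omega : ¬ t = t + 1), if_pos rfl]
            exact ⟨hiS, by omega⟩
        · intro t ht
          show u (η - t) ≤ x (if t = m + 1 then ns m - i else ns t) ∧
            n₀ ≤ (if t = m + 1 then ns m - i else ns t) + t * k
          rcases Nat.lt_succ_iff_lt_or_eq.mp (Nat.lt_succ_of_le ht) with h | h
          · rw [if_neg (by omega : ¬ t = m + 1)]
            exact hinv t (by omega)
          · subst h
            rw [if_pos rfl]
            refine ⟨hxi, ?_⟩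
            have hmul : (m + 1) * k = m * k + k := by ring
            omega
    obtain ⟨ns, c, h0, hc, hinv⟩ := trace η le_rfl
    -- apply the iteration condition
    set c' : ℕ → ℕ := fun t => if 1 ≤ t ∧ t ≤ η then c t else s₀ with hc'def
    have hc'S : ∀ m, 1 ≤ m → c' m ∈ S := by
      intro m hm
      by_cases h : 1 ≤ m ∧ m ≤ η
      · rw [hc'def]
        simp only [if_pos h]
        obtain ⟨h1, h2⟩ := h
        have h3 := (hc (m - 1) (by omega)).1
        have hm1 : m - 1 + 1 = m := by omega
        rwa [hm1] at h3
      · rw [hc'def]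
        simp only [if_neg h]
        exact hs₀
    obtain ⟨N1, N2, hN10, hN12, hN2η, hjmem⟩ := hiter c' hc'S
    have hsum_eq : ∑ m ∈ Icc N1 N2, c' m = ∑ m ∈ Icc N1 N2, c m := by
      apply Finset.sum_congr rfl
      intro m hm
      obtain ⟨hm1, hm2⟩ := Finset.mem_Icc.mp hm
      rw [hc'def]
      simp only [if_pos (⟨by omega, by omega⟩ : 1 ≤ m ∧ m ≤ η)]
    set j : ℕ := ∑ m ∈ Icc N1 N2, c m with hjdef
    have hjB : j ∈ indexSet k B := by
      rw [← hsum_eq]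
      exact hjmem
    obtain ⟨hj1, hjk⟩ : 1 ≤ j ∧ j ≤ k := Finset.mem_Icc.mp (indexSet_subset k B hjB)
    -- telescoping
    have tel : ∀ bnd, bnd ≤ η → ∀ aa, aa ≤ bnd →
        ns aa = ns bnd + ∑ m ∈ Icc (aa + 1) bnd, c m := by
      intro bnd
      induction bnd with
      | zero =>
        intro _ aa haa
        have : aa = 0 := by omega
        subst this
        simp
      | succ bnd ih =>
        intro hbη aa haa
        rcases Nat.lt_succ_iff_lt_or_eq.mp (Nat.lt_succ_of_le haa) with h | h
        · have h1 := ih (by omega) aa (by omega)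
          have h2 := (hc bnd (by omega)).2
          rw [Finset.sum_Icc_succ_top (by omega : aa + 1 ≤ bnd + 1)]
          omega
        · subst h
          rw [Finset.Icc_eq_empty (by omega), Finset.sum_empty]
          omega
    -- the hit
    have htel1 := tel N2 hN2η (N1 - 1) (by omega)
    have hN1e : N1 - 1 + 1 = N1 := by omega
    rw [hN1e] at htel1
    obtain ⟨hxn', hnn'⟩ := hinv (N1 - 1) (by omega)
    have hxn'T : T ≤ x (ns (N1 - 1)) := le_trans (huT _) hxn'
    obtain ⟨hxN2u, _⟩ := hinv N2 (by omega)
    have hxN2T : T ≤ x (ns N2) := le_trans (huT _) hxN2u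
    have hmk2 : (N1 - 1) * k ≤ k * η := by
      rw [mul_comm]; exact Nat.mul_le_mul_left k (by omega)
    have hn'2k : 2 * k ≤ ns (N1 - 1) := by omega
    have htel0 := tel (N1 - 1) (by omega) 0 (by omega)
    rw [h0] at htel0
    have hn'le : ns (N1 - 1) ≤ n₀ := by omega
    have hjn' : ns (N1 - 1) - j = ns N2 := by omega
    have hDlow : b * T ≤ Dn (ns (N1 - 1)) := by
      have h1 : B j * x (ns (N1 - 1) - j) ≤ ∑ jj ∈ Icc 1 k, B jj * x (ns (N1 - 1) - jj) :=
        Finset.single_le_sum (f := fun jj => B jj * x (ns (N1 - 1) - jj))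
          (fun jj _ => mul_nonneg (hB jj) (hxnn _)) (Finset.mem_Icc.mpr ⟨hj1, hjk⟩)
      have h2 : 0 ≤ ∑ jj ∈ Icc 1 k, C jj * y (ns (N1 - 1) - jj) :=
        Finset.sum_nonneg fun jj _ => mul_nonneg (hC jj) (hynn _)
      have h3 : b * T ≤ B j * x (ns (N1 - 1) - j) := by
        rw [hjn']
        exact mul_le_mul (hble j hjB) hxN2T (by linarith) (hB j)
      rw [hDneq]
      linarith
    have hKI := KI (ns (N1 - 1)) (by omega)
    have hsumL : ∑ i ∈ S, x (ns (N1 - 1) - i) ≤ (k : ℝ) * L := by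
      calc ∑ i ∈ S, x (ns (N1 - 1) - i) ≤ ∑ _i ∈ S, L := by
            apply Finset.sum_le_sum
            intro i hi
            obtain ⟨hi1, hik⟩ := hSk i hi
            exact hmin _ (by omega)
        _ = (S.card : ℝ) * L := by rw [Finset.sum_const, nsmul_eq_mul]
        _ ≤ (k : ℝ) * L := mul_le_mul_of_nonneg_right hScard hL0
    have hlhs : (T - K0) * (b * T) ≤ (x (ns (N1 - 1)) - K0) * Dn (ns (N1 - 1)) :=
      mul_le_mul (by linarith) hDlow (mul_nonneg hb0.le (by linarith)) (by linarith)
    have hrhs : K2 + 2 * K1 * ∑ i ∈ S, x (ns (N1 - 1) - i) ≤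
        K2 + 2 * K1 * ((k : ℝ) * L) := by
      have := mul_le_mul_of_nonneg_left hsumL (by linarith : (0 : ℝ) ≤ 2 * K1)
      linarith
    have hmid : K2 + 2 * K1 * ((k : ℝ) * L) ≤
        K2 + 2 * K1 * ((k : ℝ) * (P * T + Q + mi + T)) := by
      have h1 : (k : ℝ) * L ≤ (k : ℝ) * (P * T + Q + mi + T) :=
        mul_le_mul_of_nonneg_left hLle hkR.le
      have := mul_le_mul_of_nonneg_left h1 (by linarith : (0 : ℝ) ≤ 2 * K1)
      linarith
    have hchain : (T - K0) * (b * T) ≤ K2 + 2 * K1 * ((k : ℝ) * (P * T + Q + mi + T)) :=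
      le_trans hlhs (le_trans hKI (le_trans hrhs hmid))
    linarith only [hTbig, hchain]
lemma ylow (k : ℕ) (hk : 0 < k) (p q : ℝ) (δ ε D E : ℕ → ℝ)
    (hp : 0 ≤ p) (hq : 0 ≤ q)
    (hδ : ∀ i, 0 ≤ δ i) (hε : ∀ i, 0 ≤ ε i) (hD : ∀ j, 0 ≤ D j) (hE : ∀ j, 0 ≤ E j)
    (x y : ℕ → ℝ) (hxnn : ∀ n, 0 ≤ x n) (hynn : ∀ n, 0 ≤ y n)
    (hden : ∀ n, k ≤ n →
      0 < q + ∑ j ∈ Icc 1 k, D j * x (n - j) + ∑ j ∈ Icc 1 k, E j * y (n - j))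
    (hrec : ∀ n, k ≤ n → y n =
      (p + ∑ i ∈ Icc 1 k, δ i * x (n - i) + ∑ i ∈ Icc 1 k, ε i * y (n - i)) /
      (q + ∑ j ∈ Icc 1 k, D j * x (n - j) + ∑ j ∈ Icc 1 k, E j * y (n - j)))
    (hDδ : indexSet k D ⊆ indexSet k δ) (hEε : indexSet k E ⊆ indexSet k ε)
    (hq' : q = 0 ∨ (0 < q ∧ 0 < p)) :
    ∃ r : ℝ, 0 < r ∧ ∀ n, k ≤ n → r ≤ y n := by
  have hne : (Icc 1 k).Nonempty := ⟨1, Finset.mem_Icc.mpr ⟨le_refl 1, hk⟩⟩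
  set f : ℕ → ℝ :=
    fun j => min (if 0 < D j then δ j / D j else 1) (if 0 < E j then ε j / E j else 1)
    with hf
  set r0 : ℝ := (Icc 1 k).inf' hne f with hr0def
  have hr00 : 0 < r0 := by
    rw [hr0def, Finset.lt_inf'_iff]
    intro j hj
    rw [hf]
    dsimp only
    apply lt_min
    · split_ifs with h
      · exact div_pos (Finset.mem_filter.mp (hDδ (Finset.mem_filter.mpr ⟨hj, h⟩))).2 h
      · exact one_pos
    · split_ifs with h
      · exact div_pos (Finset.mem_filter.mp (hEε (Finset.mem_filter.mpr ⟨hj, h⟩))).2 h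
      · exact one_pos
  have hrD : ∀ j ∈ Icc 1 k, r0 * D j ≤ δ j := by
    intro j hj
    have h1 : r0 ≤ f j := Finset.inf'_le f hj
    rw [hf] at h1
    dsimp only at h1
    rcases (hD j).eq_or_lt with h | h
    · rw [← h, mul_zero]; exact hδ j
    · have h2 : r0 ≤ δ j / D j := by
        have h3 := le_trans h1 (min_le_left _ _)
        rwa [if_pos h] at h3
      exact (le_div_iff₀ h).mp h2
  have hrE : ∀ j ∈ Icc 1 k, r0 * E j ≤ ε j := by
    intro j hj
    have h1 : r0 ≤ f j := Finset.inf'_le f hj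
    rw [hf] at h1
    dsimp only at h1
    rcases (hE j).eq_or_lt with h | h
    · rw [← h, mul_zero]; exact hε j
    · have h2 : r0 ≤ ε j / E j := by
        have h3 := le_trans h1 (min_le_right _ _)
        rwa [if_pos h] at h3
      exact (le_div_iff₀ h).mp h2
  clear_value r0
  obtain ⟨r, hrpos, hrr0, hrqp⟩ : ∃ r : ℝ, 0 < r ∧ r ≤ r0 ∧ r * q ≤ p := by
    rcases hq' with hq0 | ⟨hqpos, hppos⟩
    · exact ⟨r0, hr00, le_rfl, by rw [hq0, mul_zero]; exact hp⟩
    · refine ⟨min (p / q) r0, lt_min (div_pos hppos hqpos) hr00, min_le_right _ _, ?_⟩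
      have h1 : min (p / q) r0 ≤ p / q := min_le_left _ _
      have h2 := mul_le_mul_of_nonneg_right h1 hqpos.le
      rwa [div_mul_cancel₀ p (ne_of_gt hqpos)] at h2
  refine ⟨r, hrpos, ?_⟩
  intro n hn
  have hdn := hden n hn
  have h1 : y n * (q + ∑ j ∈ Icc 1 k, D j * x (n - j) + ∑ j ∈ Icc 1 k, E j * y (n - j)) =
      p + ∑ i ∈ Icc 1 k, δ i * x (n - i) + ∑ i ∈ Icc 1 k, ε i * y (n - i) := by
    rw [hrec n hn, div_mul_cancel₀ _ (ne_of_gt hdn)]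
  have hsD : ∑ j ∈ Icc 1 k, r * (D j * x (n - j)) ≤ ∑ j ∈ Icc 1 k, δ j * x (n - j) := by
    apply Finset.sum_le_sum
    intro j hj
    rw [← mul_assoc]
    apply mul_le_mul_of_nonneg_right _ (hxnn _)
    exact le_trans (mul_le_mul_of_nonneg_right hrr0 (hD j)) (hrD j hj)
  have hsE : ∑ j ∈ Icc 1 k, r * (E j * y (n - j)) ≤ ∑ j ∈ Icc 1 k, ε j * y (n - j) := by
    apply Finset.sum_le_sum
    intro j hj
    rw [← mul_assoc]
    apply mul_le_mul_of_nonneg_right _ (hynn _)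
    exact le_trans (mul_le_mul_of_nonneg_right hrr0 (hE j)) (hrE j hj)
  have h2 : r * (q + ∑ j ∈ Icc 1 k, D j * x (n - j) + ∑ j ∈ Icc 1 k, E j * y (n - j)) ≤
      y n * (q + ∑ j ∈ Icc 1 k, D j * x (n - j) + ∑ j ∈ Icc 1 k, E j * y (n - j)) := by
    rw [h1]
    have hexp : r * (q + ∑ j ∈ Icc 1 k, D j * x (n - j) + ∑ j ∈ Icc 1 k, E j * y (n - j)) =
        r * q + ∑ j ∈ Icc 1 k, r * (D j * x (n - j)) + ∑ j ∈ Icc 1 k, r * (E j * y (n - j)) := by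
      rw [mul_add, mul_add, Finset.mul_sum, Finset.mul_sum]
    rw [hexp]
    linarith [hsD, hsE, hrqp]
  exact le_of_mul_le_mul_right h2 hdn
set_option maxHeartbeats 1000000 in
theorem stmt_15
    (k : ℕ) (hk : 0 < k)
    (α A p q : ℝ) (β γ B C δ ε D E : ℕ → ℝ)
    (hα : 0 ≤ α) (hA : 0 ≤ A) (hp : 0 ≤ p) (hq : 0 ≤ q)
    (hβ : ∀ i, 0 ≤ β i) (hγ : ∀ i, 0 ≤ γ i) (hB : ∀ j, 0 ≤ B j) (hC : ∀ j, 0 ≤ C j)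
    (hδ : ∀ i, 0 ≤ δ i) (hε : ∀ i, 0 ≤ ε i) (hD : ∀ j, 0 ≤ D j) (hE : ∀ j, 0 ≤ E j)
    (x y : ℕ → ℝ)
    (hxnn : ∀ n, 0 ≤ x n) (hynn : ∀ n, 0 ≤ y n)
    (hxden : ∀ n, k ≤ n →
      0 < A + ∑ j ∈ Icc 1 k, B j * x (n - j) + ∑ j ∈ Icc 1 k, C j * y (n - j))
    (hyden : ∀ n, k ≤ n →
      0 < q + ∑ j ∈ Icc 1 k, D j * x (n - j) + ∑ j ∈ Icc 1 k, E j * y (n - j))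
    (hxrec : ∀ n, k ≤ n → x n =
      (α + ∑ i ∈ Icc 1 k, β i * x (n - i) + ∑ i ∈ Icc 1 k, γ i * y (n - i)) /
      (A + ∑ j ∈ Icc 1 k, B j * x (n - j) + ∑ j ∈ Icc 1 k, C j * y (n - j)))
    (hyrec : ∀ n, k ≤ n → y n =
      (p + ∑ i ∈ Icc 1 k, δ i * x (n - i) + ∑ i ∈ Icc 1 k, ε i * y (n - i)) /
      (q + ∑ j ∈ Icc 1 k, D j * x (n - j) + ∑ j ∈ Icc 1 k, E j * y (n - j)))
    (M1 M2 : ℝ) (hM1 : 0 < M1) (hM2 : 0 ≤ M2)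
    (hcmp : ∀ n, y n ≤ M1 * x n + M2)
    (hA0 : A = 0)
    (hcase :
      (indexSet k B ⊆ indexSet k β ∧ indexSet k C ⊆ indexSet k γ ∧
        indexSet k B ≠ ∅) ∨
      (q = 0 ∧ indexSet k D ⊆ indexSet k δ ∧ indexSet k E ⊆ indexSet k ε ∧
        indexSet k C ≠ ∅) ∨
      (0 < p ∧ 0 < q ∧ indexSet k D ⊆ indexSet k δ ∧ indexSet k E ⊆ indexSet k ε ∧
        indexSet k C ≠ ∅))
    (hη : ∃ η : ℕ, 0 < η ∧
      iterCond η (indexSet k β ∪ (indexSet k γ \ indexSet k C)) (indexSet k B)) :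
    ∃ M : ℝ, 0 < M ∧ ∃ N : ℕ, ∀ n, N < n → x n ≤ M ∧ y n ≤ M := by
  subst hA0
  have hdpos : ∀ n, k ≤ n →
      0 < ∑ j ∈ Icc 1 k, B j * x (n - j) + ∑ j ∈ Icc 1 k, C j * y (n - j) := by
    intro n hn
    have := hxden n hn
    linarith
  have hrec : ∀ n, k ≤ n →
      x n * (∑ j ∈ Icc 1 k, B j * x (n - j) + ∑ j ∈ Icc 1 k, C j * y (n - j)) =
      α + ∑ i ∈ Icc 1 k, β i * x (n - i) + ∑ i ∈ Icc 1 k, γ i * y (n - i) := by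
    intro n hn
    have h1 := hxrec n hn
    have h2 := hdpos n hn
    rw [zero_add] at h1
    rw [h1, div_mul_cancel₀ _ (ne_of_gt h2)]
  obtain ⟨d, hd0, hd⟩ : ∃ d : ℝ, 0 < d ∧ ∀ n, 2 * k ≤ n →
      d ≤ ∑ j ∈ Icc 1 k, B j * x (n - j) + ∑ j ∈ Icc 1 k, C j * y (n - j) := by
    rcases hcase with ⟨hBβ, hCγ, hIBne⟩ | hcase2
    · -- case (i): x is bounded below
      obtain ⟨r, hr0, hxlow⟩ : ∃ r : ℝ, 0 < r ∧ ∀ n, k ≤ n → r ≤ x n := by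
        apply ylow k hk α 0 γ β C B hα le_rfl hγ hβ hC hB y x hynn hxnn
        · intro n hn
          have := hdpos n hn
          linarith
        · intro n hn
          rw [hxrec n hn]
          ring
        · exact hCγ
        · exact hBβ
        · exact Or.inl rfl
      have hB0 : 0 < ∑ j ∈ Icc 1 k, B j := by
        obtain ⟨j0, hj0⟩ := Finset.nonempty_iff_ne_empty.mpr hIBne
        have hj0m := Finset.mem_filter.mp hj0
        exact Finset.sum_pos' (fun j _ => hB j) ⟨j0, hj0m.1, hj0m.2⟩
      refine ⟨r * ∑ j ∈ Icc 1 k, B j, mul_pos hr0 hB0, ?_⟩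
      intro n hn
      have h1 : ∀ j ∈ Icc 1 k, B j * r ≤ B j * x (n - j) := by
        intro j hj
        apply mul_le_mul_of_nonneg_left _ (hB j)
        apply hxlow
        obtain ⟨hj1, hjk⟩ := Finset.mem_Icc.mp hj
        omega
      have h2 : ∑ j ∈ Icc 1 k, B j * r ≤ ∑ j ∈ Icc 1 k, B j * x (n - j) :=
        Finset.sum_le_sum h1
      have h3 : 0 ≤ ∑ j ∈ Icc 1 k, C j * y (n - j) :=
        Finset.sum_nonneg fun j _ => mul_nonneg (hC j) (hynn _)
      have h4 : ∑ j ∈ Icc 1 k, B j * r = r * ∑ j ∈ Icc 1 k, B j := by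
        rw [← Finset.sum_mul, mul_comm]
      linarith
    · -- cases (ii) and (iii): y is bounded below
      have hex : (indexSet k D ⊆ indexSet k δ ∧ indexSet k E ⊆ indexSet k ε ∧
          indexSet k C ≠ ∅) ∧ (q = 0 ∨ (0 < q ∧ 0 < p)) := by
        rcases hcase2 with ⟨h1, h2, h3, h4⟩ | ⟨h1, h2, h3, h4, h5⟩
        · exact ⟨⟨h2, h3, h4⟩, Or.inl h1⟩
        · exact ⟨⟨h3, h4, h5⟩, Or.inr ⟨h2, h1⟩⟩
      obtain ⟨⟨hDδ, hEε, hICne⟩, hq'⟩ := hex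
      obtain ⟨r, hr0, hylow⟩ : ∃ r : ℝ, 0 < r ∧ ∀ n, k ≤ n → r ≤ y n :=
        ylow k hk p q δ ε D E hp hq hδ hε hD hE x y hxnn hynn hyden hyrec hDδ hEε hq'
      have hC0 : 0 < ∑ j ∈ Icc 1 k, C j := by
        obtain ⟨j0, hj0⟩ := Finset.nonempty_iff_ne_empty.mpr hICne
        have hj0m := Finset.mem_filter.mp hj0
        exact Finset.sum_pos' (fun j _ => hC j) ⟨j0, hj0m.1, hj0m.2⟩
      refine ⟨r * ∑ j ∈ Icc 1 k, C j, mul_pos hr0 hC0, ?_⟩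
      intro n hn
      have h1 : ∀ j ∈ Icc 1 k, C j * r ≤ C j * y (n - j) := by
        intro j hj
        apply mul_le_mul_of_nonneg_left _ (hC j)
        apply hylow
        obtain ⟨hj1, hjk⟩ := Finset.mem_Icc.mp hj
        omega
      have h2 : ∑ j ∈ Icc 1 k, C j * r ≤ ∑ j ∈ Icc 1 k, C j * y (n - j) :=
        Finset.sum_le_sum h1
      have h3 : 0 ≤ ∑ j ∈ Icc 1 k, B j * x (n - j) :=
        Finset.sum_nonneg fun j _ => mul_nonneg (hB j) (hxnn _)
      have h4 : ∑ j ∈ Icc 1 k, C j * r = r * ∑ j ∈ Icc 1 k, C j := by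
        rw [← Finset.sum_mul, mul_comm]
      linarith
  obtain ⟨Mx, hMx⟩ := core k hk α β γ B C hα hβ hγ hB hC x y hxnn hynn M1 M2 hM1 hM2
    hcmp hdpos hrec d hd0 hd hη
  have hMx0 : 0 ≤ Mx := le_trans (hxnn 0) (hMx 0)
  refine ⟨Mx + M1 * Mx + M2 + 1, by linarith only [hMx0, hM2, mul_nonneg hM1.le hMx0], 0, fun n _ => ⟨by linarith only [hMx n, hM2, mul_nonneg hM1.le hMx0], ?_⟩⟩
  have h1 := hcmp n
  have h2 := hMx n
  have h3 : M1 * x n ≤ M1 * Mx := mul_le_mul_of_nonneg_left h2 hM1.le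
  linarith
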